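/- Let c < 0 and p a positive even integer. If Q : ℝ → ℝ is smooth, rapidly decaying, and satisfies c·Q'''' + (c−1)·Q − Q^(p+1)/(p+1) = 0 on ℝ, then Q is identically zero. -/

import Mathlib

open SchwartzMap MeasureTheory

lemma schwartz_bdd_aux (f : 𝓢(ℝ, ℝ)) : ∃ C, ∀ x, ‖f x‖ ≤ C :=
  ⟨SchwartzMap.seminorm ℝ 0 0 f, fun x => SchwartzMap.norm_le_seminorm ℝ f x⟩

lemma schwartz_mul_integrable_aux (f g : 𝓢(ℝ, ℝ)) :
    Integrable (fun x => f x * g x) :=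
  g.integrable.bdd_mul f.continuous.aestronglyMeasurable
    (Filter.Eventually.of_forall (schwartz_bdd_aux f).choose_spec)

lemma schwartz_hasDerivAt_aux (f : 𝓢(ℝ, ℝ)) (x : ℝ) :
    HasDerivAt f (derivCLM ℝ ℝ f x) x := by
  rw [derivCLM_apply]
  exact (f.differentiable x).hasDerivAt

/-- Integration by parts for Schwartz functions: ∫ f g' = - ∫ f' g -/
lemma schwartz_ibp_aux (f g : 𝓢(ℝ, ℝ)) :
    ∫ x, f x * derivCLM ℝ ℝ g x = - ∫ x, derivCLM ℝ ℝ f x * g x := by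
  exact integral_mul_deriv_eq_deriv_mul_of_integrable
    (fun x _ => schwartz_hasDerivAt_aux f x) (fun x _ => schwartz_hasDerivAt_aux g x)
    (schwartz_mul_integrable_aux f (derivCLM ℝ ℝ g))
    (schwartz_mul_integrable_aux (derivCLM ℝ ℝ f) g)
    (schwartz_mul_integrable_aux f g)

theorem rosenau_no_solitary_wave_of_negative_speed_even_p
    (Q : 𝓢(ℝ, ℝ)) (c : ℝ) (p : ℕ) (hp : 0 < p) (hpe : Even p)
    (hc : c < 0)
    (hODE : ∀ x : ℝ, c * iteratedDeriv 4 Q x + (c - 1) * Q x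
      - (Q x) ^ (p + 1) / ((p : ℝ) + 1) = 0) :
    ∀ x : ℝ, Q x = 0 := by
  set Q1 := derivCLM ℝ ℝ Q with hQ1
  set Q2 := derivCLM ℝ ℝ Q1 with hQ2
  set Q3 := derivCLM ℝ ℝ Q2 with hQ3
  set Q4 := derivCLM ℝ ℝ Q3 with hQ4
  -- identify iteratedDeriv 4 Q with Q4
  have hderivfun : ∀ f : 𝓢(ℝ, ℝ), deriv (⇑f) = ⇑(derivCLM ℝ ℝ f) := by
    intro f; funext x; rw [derivCLM_apply]
  have hit4 : ∀ x, iteratedDeriv 4 (⇑Q) x = Q4 x := by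
    intro x
    have : iteratedDeriv 4 (⇑Q) = ⇑Q4 := by
      rw [show (4 : ℕ) = 3 + 1 from rfl, iteratedDeriv_succ']
      rw [hderivfun Q, ← hQ1]
      rw [show (3 : ℕ) = 2 + 1 from rfl, iteratedDeriv_succ']
      rw [hderivfun Q1, ← hQ2]
      rw [show (2 : ℕ) = 1 + 1 from rfl, iteratedDeriv_succ']
      rw [hderivfun Q2, ← hQ3]
      rw [iteratedDeriv_one, hderivfun Q3, ← hQ4]
    rw [this]
  -- key integrability facts
  have hQQ4 := schwartz_mul_integrable_aux Q Q4
  have hQQ := schwartz_mul_integrable_aux Q Q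
  have hQ2Q2 := schwartz_mul_integrable_aux Q2 Q2
  have hbdd : ∃ C, ∀ x, ‖(Q x) ^ p‖ ≤ C := by
    obtain ⟨C, hC⟩ := schwartz_bdd_aux Q
    exact ⟨(C + 1) ^ p, fun x => by
      rw [norm_pow]
      exact pow_le_pow_left₀ (norm_nonneg _) (le_trans (hC x) (by linarith)) p⟩
  have hQp2 : Integrable (fun x => (Q x) ^ (p + 2)) := by
    have : Integrable (fun x => (Q x) ^ p * (Q x * Q x)) :=
      hQQ.bdd_mul (Q.continuous.pow p).aestronglyMeasurable (Filter.Eventually.of_forall hbdd.choose_spec)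
    refine this.congr (Filter.Eventually.of_forall fun x => ?_)
    ring
  -- integration by parts twice : ∫ Q * Q4 = ∫ Q2 * Q2
  have hIBP : ∫ x, Q x * Q4 x = ∫ x, Q2 x * Q2 x := by
    rw [hQ4, schwartz_ibp_aux Q Q3, ← hQ1, hQ3, schwartz_ibp_aux Q1 Q2, ← hQ2, neg_neg]
  -- the pointwise identity multiplied by Q
  have hpt : ∀ x, c * (Q x * Q4 x) + (c - 1) * (Q x * Q x)
      - (Q x) ^ (p + 2) / ((p : ℝ) + 1) = 0 := by
    intro x
    have h := hODE x
    rw [hit4 x] at h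
    have h' := congrArg (· * Q x) h
    simp only [zero_mul] at h'
    calc c * (Q x * Q4 x) + (c - 1) * (Q x * Q x) - (Q x) ^ (p + 2) / ((p : ℝ) + 1)
        = (c * Q4 x + (c - 1) * Q x - (Q x) ^ (p + 1) / ((p : ℝ) + 1)) * Q x := by ring
      _ = 0 := h'
  -- integrate
  have hint_eq : c * (∫ x, Q x * Q4 x) + (c - 1) * (∫ x, Q x * Q x)
      - (∫ x, (Q x) ^ (p + 2)) / ((p : ℝ) + 1) = 0 := by
    have h1 : ∫ x, (c * (Q x * Q4 x) + (c - 1) * (Q x * Q x)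
        - (Q x) ^ (p + 2) / ((p : ℝ) + 1)) = 0 := by
      simp only [hpt, integral_zero]
    have hA : Integrable (fun x => c * (Q x * Q4 x) + (c - 1) * (Q x * Q x)) volume :=
      (hQQ4.const_mul c).add (hQQ.const_mul (c - 1))
    have hB : Integrable (fun x => (Q x) ^ (p + 2) / ((p : ℝ) + 1)) volume :=
      hQp2.div_const _
    rw [integral_sub hA hB, integral_add (hQQ4.const_mul c) (hQQ.const_mul (c - 1)),
      integral_const_mul, integral_const_mul, integral_div] at h1
    exact h1
  rw [hIBP] at hint_eq
  -- sign analysis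
  have hI2 : (0 : ℝ) ≤ ∫ x, Q2 x * Q2 x :=
    integral_nonneg fun x => mul_self_nonneg _
  have hIQ : (0 : ℝ) ≤ ∫ x, Q x * Q x :=
    integral_nonneg fun x => mul_self_nonneg _
  have hIp : (0 : ℝ) ≤ ∫ x, (Q x) ^ (p + 2) := by
    refine integral_nonneg fun x => ?_
    exact (hpe.add (by decide : Even 2)).pow_nonneg _
  have hp1 : (0 : ℝ) < (p : ℝ) + 1 := by positivity
  have hQint0 : ∫ x, Q x * Q x = 0 := by
    nlinarith [mul_nonpos_of_nonpos_of_nonneg hc.le hI2,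
      div_nonneg hIp hp1.le]
  -- conclude Q = 0
  have hae : (fun x => Q x * Q x) =ᵐ[volume] (0 : ℝ → ℝ) := by
    rw [← integral_eq_zero_iff_of_nonneg (fun x => mul_self_nonneg _) hQQ]
    exact hQint0
  have heq : (fun x => Q x * Q x) = (0 : ℝ → ℝ) :=
    (Continuous.ae_eq_iff_eq volume (by fun_prop) continuous_const).mp hae
  intro x
  have := congrFun heq x
  simp only [Pi.zero_apply] at this
  exact mul_self_eq_zero.mp this
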